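/- Let $X$ and $Y$ be compact metric spaces and $\mathcal{F} = (g_1, \ldots, g_N)$ an $N$-tuple of continuous injective functions from $X$ to $Y$. Let $\hat{\mathcal{P}}$ be an intersective partition of $[N] \times [2]$ (i.e., there exist $i_1, i_2 \in [N]$ with $(i_1, 1)$ and $(i_2, 2)$ in the same block) such that $X^\Delta_{\hat{\mathcal{P}}} \ne \emptyset$. Then there exists a homeomorphism $T : \pi_1(X^\Delta_{\hat{\mathcal{P}}}) \to \pi_2(X^\Delta_{\hat{\mathcal{P}}})$ such that for all $i_1 \ne i_2$ in $[N]$ with $(i_1, 1)$ and $(i_2, 2)$ in the same block of $\hat{\mathcal{P}}$, and all $x \in \pi_1(X^\Delta_{\hat{\mathcal{P}}})$, it holds that $g_{i_1}(x) = g_{i_2}(T(x))$. -/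

import Mathlib

/-- `evalAt g (x₁,x₂) (i,j) = g_i(x_j)`. -/
def evalAt {X Y : Type*} {N : ℕ} (g : Fin N → X → Y) (p : X × X)
    (a : Fin N × Fin 2) : Y :=
  g a.1 (if a.2 = 0 then p.1 else p.2)

/-- The partition (setoid) of `[N] × [2]` induced by a pair `(x₁,x₂)`. -/
def inducedPartition {X Y : Type*} {N : ℕ} (g : Fin N → X → Y) (p : X × X) :
    Setoid (Fin N × Fin 2) :=
  Setoid.ker (evalAt g p)

theorem stmt5 {X Y : Type*} [MetricSpace X] [CompactSpace X]
    [MetricSpace Y] [CompactSpace Y] (N : ℕ) (g : Fin N → C(X, Y))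
    (hginj : ∀ i, Function.Injective (g i))
    (P : Setoid (Fin N × Fin 2))
    (hintersective : ∃ i₁ i₂ : Fin N, P.r (i₁, 0) (i₂, 1))
    (hne : {p : X × X | p.1 ≠ p.2 ∧
      inducedPartition (fun i => (g i : X → Y)) p = P}.Nonempty) :
    ∃ T : (Prod.fst '' {p : X × X | p.1 ≠ p.2 ∧
            inducedPartition (fun i => (g i : X → Y)) p = P}) ≃ₜ
          (Prod.snd '' {p : X × X | p.1 ≠ p.2 ∧
            inducedPartition (fun i => (g i : X → Y)) p = P}),
      ∀ i₁ i₂ : Fin N, i₁ ≠ i₂ → P.r (i₁, 0) (i₂, 1) →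
        ∀ x : (Prod.fst '' {p : X × X | p.1 ≠ p.2 ∧
            inducedPartition (fun i => (g i : X → Y)) p = P}),
          g i₁ (x : X) = g i₂ ((T x : X)) := by
  classical
  obtain ⟨i₁', i₂', hP⟩ := hintersective
  set S : Set (X × X) := {p : X × X | p.1 ≠ p.2 ∧
      inducedPartition (fun i => (g i : X → Y)) p = P} with hS
  have key : ∀ p ∈ S, ∀ i j : Fin N, P.r (i, 0) (j, 1) → g i p.1 = g j p.2 := by
    intro p hp i j hij
    rw [← hp.2] at hij
    simpa [evalAt] using Setoid.ker_def.mp (show Setoid.ker (evalAt (fun i => (g i : X → Y)) p) (i, 0) (j, 1) from hij)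
  have uniq2 : ∀ x a b : X, (x, a) ∈ S → (x, b) ∈ S → a = b := fun x a b ha hb =>
    hginj i₂' ((key _ ha i₁' i₂' hP).symm.trans (key _ hb i₁' i₂' hP))
  have uniq1 : ∀ y a b : X, (a, y) ∈ S → (b, y) ∈ S → a = b := fun y a b ha hb =>
    hginj i₁' ((key _ ha i₁' i₂' hP).trans (key _ hb i₁' i₂' hP).symm)
  have memA : ∀ x : Prod.fst '' S, ∃ y, ((x : X), y) ∈ S := by
    rintro ⟨x, ⟨p, hp, rfl⟩⟩; exact ⟨p.2, hp⟩
  have memB : ∀ y : Prod.snd '' S, ∃ x, (x, (y : X)) ∈ S := by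
    rintro ⟨y, ⟨p, hp, rfl⟩⟩; exact ⟨p.1, hp⟩
  choose f hf using memA
  choose f' hf' using memB
  let F : (Prod.fst '' S) → (Prod.snd '' S) := fun x => ⟨f x, ⟨((x : X), f x), hf x, rfl⟩⟩
  let G : (Prod.snd '' S) → (Prod.fst '' S) := fun y => ⟨f' y, ⟨(f' y, (y : X)), hf' y, rfl⟩⟩
  have hleft : Function.LeftInverse G F := by
    intro x
    exact Subtype.ext (uniq1 (f x) _ _ (hf' (F x)) (hf x))
  have hright : Function.RightInverse G F := by
    intro y
    exact Subtype.ext (uniq2 (f' y) _ _ (hf (G y)) (hf' y))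
  have embed₁ := (g i₁').continuous.isClosedEmbedding (hginj i₁')
  have embed₂ := (g i₂').continuous.isClosedEmbedding (hginj i₂')
  have hgF : ∀ x, g i₂' (f x) = g i₁' (x : X) := fun x => (key _ (hf x) i₁' i₂' hP).symm
  have hgG : ∀ y, g i₁' (f' y) = g i₂' (y : X) := fun y => key _ (hf' y) i₁' i₂' hP
  have contF : Continuous F := by
    apply Continuous.subtype_mk
    rw [embed₂.toIsEmbedding.continuous_iff]
    have : (⇑(g i₂') ∘ fun x : Prod.fst '' S => f x) =
        fun x : Prod.fst '' S => g i₁' (x : X) := funext fun x => hgF x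
    rw [this]
    exact (g i₁').continuous.comp continuous_subtype_val
  have contG : Continuous G := by
    apply Continuous.subtype_mk
    rw [embed₁.toIsEmbedding.continuous_iff]
    have : (⇑(g i₁') ∘ fun y : Prod.snd '' S => f' y) =
        fun y : Prod.snd '' S => g i₂' (y : X) := funext fun y => hgG y
    rw [this]
    exact (g i₂').continuous.comp continuous_subtype_val
  refine ⟨⟨⟨F, G, hleft, hright⟩, contF, contG⟩, ?_⟩
  intro i₁ i₂ _ hrel x
  exact key _ (hf x) i₁ i₂ hrel
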